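/- With b = −2ω², σ₁ = 2(kℓ + ω²), σ₂ = 2(ℓ² + kℓ − ω²), σ₃ = 2(k² + kℓ − ω²), σ₄ = 2(k² + ℓ² + kℓ − 3ω²), the quantity D = 1 + b[1/(σ₁ − b) + 1/(σ₂ + b) + 1/(σ₃ + b) + 1/(σ₄ − b)] tends to 1 as |k| + |ℓ| → ∞ along pairs of nonzero integers k, ℓ with k + ℓ ≠ 0 (for fixed ω > 0 avoiding vanishing denominators). Consequently, for ω ∈ (1/2, 3/2) outside a finite set, D(k, ℓ, ω) ≠ 0 for all admissible (k, ℓ). -/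

import Mathlib

set_option maxRecDepth 8000

open Polynomial

/-- `D = 1 + b[1/(σ₁−b) + 1/(σ₂+b) + 1/(σ₃+b) + 1/(σ₄−b)]` with `b = −2ω²`,
`σ₁ − b = 2(kℓ + 2ω²)`, `σ₂ + b = 2(ℓ² + kℓ − 2ω²)`, `σ₃ + b = 2(k² + kℓ − 2ω²)`,
`σ₄ − b = 2(k² + ℓ² + kℓ − 2ω²)`. -/
noncomputable def Dfun (k l : ℤ) (ω : ℝ) : ℝ :=
  1 + (-2 * ω ^ 2) *
    (1 / (2 * ((k : ℝ) * l + 2 * ω ^ 2)) +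
     1 / (2 * ((l : ℝ) ^ 2 + k * l - 2 * ω ^ 2)) +
     1 / (2 * ((k : ℝ) ^ 2 + k * l - 2 * ω ^ 2)) +
     1 / (2 * ((k : ℝ) ^ 2 + (l : ℝ) ^ 2 + k * l - 2 * ω ^ 2)))

/-- Admissibility: `k, ℓ` nonzero, `k + ℓ ≠ 0`, and all four denominators nonzero. -/
def admissible (k l : ℤ) (ω : ℝ) : Prop :=
  k ≠ 0 ∧ l ≠ 0 ∧ k + l ≠ 0 ∧
  (k : ℝ) * l + 2 * ω ^ 2 ≠ 0 ∧ (l : ℝ) ^ 2 + k * l - 2 * ω ^ 2 ≠ 0 ∧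
  (k : ℝ) ^ 2 + k * l - 2 * ω ^ 2 ≠ 0 ∧ (k : ℝ) ^ 2 + (l : ℝ) ^ 2 + k * l - 2 * ω ^ 2 ≠ 0

/-- The polynomial (in `ω`) obtained by clearing denominators in `Dfun`. -/
noncomputable def Pp (k l : ℤ) : Polynomial ℝ :=
  (C (2*((k:ℝ)*l)) + C 4 * X^2)
    * (C (2*((l:ℝ)^2 + (k:ℝ)*l)) - C 4 * X^2)
    * (C (2*((k:ℝ)^2 + (k:ℝ)*l)) - C 4 * X^2)
    * (C (2*((k:ℝ)^2 + (l:ℝ)^2 + (k:ℝ)*l)) - C 4 * X^2)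
  - C 2 * X^2 *
    ((C (2*((l:ℝ)^2 + (k:ℝ)*l)) - C 4 * X^2)
        * (C (2*((k:ℝ)^2 + (k:ℝ)*l)) - C 4 * X^2)
        * (C (2*((k:ℝ)^2 + (l:ℝ)^2 + (k:ℝ)*l)) - C 4 * X^2)
      + (C (2*((k:ℝ)*l)) + C 4 * X^2)
        * (C (2*((k:ℝ)^2 + (k:ℝ)*l)) - C 4 * X^2)
        * (C (2*((k:ℝ)^2 + (l:ℝ)^2 + (k:ℝ)*l)) - C 4 * X^2)
      + (C (2*((k:ℝ)*l)) + C 4 * X^2)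
        * (C (2*((l:ℝ)^2 + (k:ℝ)*l)) - C 4 * X^2)
        * (C (2*((k:ℝ)^2 + (l:ℝ)^2 + (k:ℝ)*l)) - C 4 * X^2)
      + (C (2*((k:ℝ)*l)) + C 4 * X^2)
        * (C (2*((l:ℝ)^2 + (k:ℝ)*l)) - C 4 * X^2)
        * (C (2*((k:ℝ)^2 + (k:ℝ)*l)) - C 4 * X^2))

lemma Pp_eval (k l : ℤ) (ω : ℝ) : (Pp k l).eval ω =
    (2*((k:ℝ)*l) + 4*ω^2)
      * (2*((l:ℝ)^2 + (k:ℝ)*l) - 4*ω^2)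
      * (2*((k:ℝ)^2 + (k:ℝ)*l) - 4*ω^2)
      * (2*((k:ℝ)^2 + (l:ℝ)^2 + (k:ℝ)*l) - 4*ω^2)
    - 2*ω^2 *
      ((2*((l:ℝ)^2 + (k:ℝ)*l) - 4*ω^2)
          * (2*((k:ℝ)^2 + (k:ℝ)*l) - 4*ω^2)
          * (2*((k:ℝ)^2 + (l:ℝ)^2 + (k:ℝ)*l) - 4*ω^2)
        + (2*((k:ℝ)*l) + 4*ω^2)
          * (2*((k:ℝ)^2 + (k:ℝ)*l) - 4*ω^2)
          * (2*((k:ℝ)^2 + (l:ℝ)^2 + (k:ℝ)*l) - 4*ω^2)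
        + (2*((k:ℝ)*l) + 4*ω^2)
          * (2*((l:ℝ)^2 + (k:ℝ)*l) - 4*ω^2)
          * (2*((k:ℝ)^2 + (l:ℝ)^2 + (k:ℝ)*l) - 4*ω^2)
        + (2*((k:ℝ)*l) + 4*ω^2)
          * (2*((l:ℝ)^2 + (k:ℝ)*l) - 4*ω^2)
          * (2*((k:ℝ)^2 + (k:ℝ)*l) - 4*ω^2)) := by
  simp [Pp]

lemma Pp_key (k l : ℤ) (ω : ℝ) (h : admissible k l ω) :
    (Pp k l).eval ω = Dfun k l ω *
      ((2 * ((k : ℝ) * l + 2 * ω ^ 2)) * (2 * ((l : ℝ) ^ 2 + k * l - 2 * ω ^ 2)) *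
       (2 * ((k : ℝ) ^ 2 + k * l - 2 * ω ^ 2)) *
       (2 * ((k : ℝ) ^ 2 + (l : ℝ) ^ 2 + k * l - 2 * ω ^ 2))) := by
  obtain ⟨-, -, -, h1, h2, h3, h4⟩ := h
  have h2' : (l:ℝ) * (l + k) - 2 * ω ^ 2 ≠ 0 := by convert h2 using 1; ring
  have h3' : (k:ℝ) * (k + l) - 2 * ω ^ 2 ≠ 0 := by convert h3 using 1; ring
  rw [Pp_eval, Dfun]
  field_simp
  ring

lemma Pp_ne_zero (k l : ℤ) (hk : k ≠ 0) (hl : l ≠ 0) (hkl : k + l ≠ 0) :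
    Pp k l ≠ 0 := by
  intro h
  have hk' : (k:ℝ) ≠ 0 := Int.cast_ne_zero.mpr hk
  have hl' : (l:ℝ) ≠ 0 := Int.cast_ne_zero.mpr hl
  have hs' : (k:ℝ) + (l:ℝ) ≠ 0 := by
    have := Int.cast_ne_zero (α := ℝ).mpr hkl
    push_cast at this; exact this
  have h0 : (Pp k l).eval 0 = 0 := by rw [h]; simp
  have h0' : (16:ℝ) * ((k:ℝ)*l) * ((l:ℝ)*(k+l)) * ((k:ℝ)*(k+l))
      * ((k:ℝ)^2 + (l:ℝ)^2 + (k:ℝ)*l) = 0 := by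
    rw [← h0, Pp_eval]; ring
  have e4 : (0:ℝ) < (k:ℝ)^2 + (l:ℝ)^2 + (k:ℝ)*l := by
    have h1 : (0:ℝ) < (l:ℝ)^2 := by positivity
    nlinarith [sq_nonneg (2*(k:ℝ) + l)]
  have h2 : (l:ℝ) * (k + l) ≠ 0 := mul_ne_zero hl' hs'
  have hkl2 : (k:ℝ) * l ≠ 0 := mul_ne_zero hk' hl'
  have h3' : (k:ℝ) * (k + l) ≠ 0 := mul_ne_zero hk' hs'
  exact (mul_ne_zero (mul_ne_zero (mul_ne_zero (mul_ne_zero (by norm_num : (16:ℝ) ≠ 0)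
    hkl2) h2) h3') (ne_of_gt e4)) h0'

lemma one_le_abs_cast {k : ℤ} (hk : k ≠ 0) : (1:ℝ) ≤ |(k:ℝ)| := by
  rw [← Int.cast_abs]
  exact_mod_cast Int.one_le_abs hk

/-- Lower bounds on the sizes of the four "bases" of the denominators. -/
lemma base_bounds (k l : ℤ) (hk : k ≠ 0) (hl : l ≠ 0) (hkl : k + l ≠ 0) :
    (|(k:ℝ)| + |(l:ℝ)|)/4 ≤ |(k:ℝ) * l| ∧
    (|(k:ℝ)| + |(l:ℝ)|)/4 ≤ |(l:ℝ)^2 + (k:ℝ) * l| ∧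
    (|(k:ℝ)| + |(l:ℝ)|)/4 ≤ |(k:ℝ)^2 + (k:ℝ) * l| ∧
    (|(k:ℝ)| + |(l:ℝ)|)/4 ≤ |(k:ℝ)^2 + (l:ℝ)^2 + (k:ℝ) * l| := by
  have hK : (1:ℝ) ≤ |(k:ℝ)| := one_le_abs_cast hk
  have hL : (1:ℝ) ≤ |(l:ℝ)| := one_le_abs_cast hl
  have hS : (1:ℝ) ≤ |(k:ℝ) + (l:ℝ)| := by
    have := one_le_abs_cast hkl
    push_cast at this; exact this
  have htriK : |(k:ℝ)| ≤ |(l:ℝ)| + |(k:ℝ) + (l:ℝ)| := by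
    have := abs_add_le ((k:ℝ) + (l:ℝ)) (-(l:ℝ))
    simp at this
    calc |(k:ℝ)| = |(k:ℝ) + l + -l| := by ring_nf
    _ ≤ |(k:ℝ) + l| + |(-(l:ℝ))| := abs_add_le _ _
    _ = |(l:ℝ)| + |(k:ℝ) + (l:ℝ)| := by rw [abs_neg]; ring
  have htriL : |(l:ℝ)| ≤ |(k:ℝ)| + |(k:ℝ) + (l:ℝ)| := by
    calc |(l:ℝ)| = |(k:ℝ) + l + -k| := by ring_nf
    _ ≤ |(k:ℝ) + l| + |(-(k:ℝ))| := abs_add_le _ _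
    _ = |(k:ℝ)| + |(k:ℝ) + (l:ℝ)| := by rw [abs_neg]; ring
  refine ⟨?_, ?_, ?_, ?_⟩
  · rw [abs_mul]
    nlinarith [mul_nonneg (by linarith : (0:ℝ) ≤ |(k:ℝ)| - 1) (by linarith : (0:ℝ) ≤ |(l:ℝ)| - 1)]
  · have : (l:ℝ)^2 + (k:ℝ)*l = l * (k + l) := by ring
    rw [this, abs_mul]
    nlinarith [mul_nonneg (by linarith : (0:ℝ) ≤ |(l:ℝ)| - 1)
      (by linarith : (0:ℝ) ≤ |(k:ℝ) + (l:ℝ)| - 1)]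
  · have : (k:ℝ)^2 + (k:ℝ)*l = k * (k + l) := by ring
    rw [this, abs_mul]
    nlinarith [mul_nonneg (by linarith : (0:ℝ) ≤ |(k:ℝ)| - 1)
      (by linarith : (0:ℝ) ≤ |(k:ℝ) + (l:ℝ)| - 1)]
  · have h4 : (|(k:ℝ)| + |(l:ℝ)|)/4 ≤ ((k:ℝ)^2 + (l:ℝ)^2 + (k:ℝ)*l) := by
      nlinarith [sq_abs (k:ℝ), sq_abs (l:ℝ), sq_nonneg ((k:ℝ) + l), sq_nonneg (|(k:ℝ)| - 1),
        sq_nonneg (|(l:ℝ)| - 1)]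
    calc (|(k:ℝ)| + |(l:ℝ)|)/4 ≤ (k:ℝ)^2 + (l:ℝ)^2 + (k:ℝ)*l := h4
    _ ≤ |(k:ℝ)^2 + (l:ℝ)^2 + (k:ℝ)*l| := le_abs_self _

lemma term_bound {x E : ℝ} (hE : 0 < E) (hx : E ≤ |x|) : |1/(2*x)| ≤ 1/(2*E) := by
  have hx0 : x ≠ 0 := by intro h; rw [h] at hx; simp at hx; linarith
  rw [abs_div, abs_one, abs_mul]
  have : |(2:ℝ)| = 2 := by norm_num
  rw [this]
  apply one_div_le_one_div_of_le (by linarith)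
  linarith

/-- Main quantitative estimate. -/
lemma Dfun_bound (k l : ℤ) (ω : ℝ) (h : admissible k l ω) (E : ℝ) (hE : 0 < E)
    (hE2 : E + 2*ω^2 ≤ (|(k:ℝ)| + |(l:ℝ)|)/4) :
    |Dfun k l ω - 1| ≤ 4 * ω^2 / E := by
  obtain ⟨hk, hl, hkl, -, -, -, -⟩ := h
  obtain ⟨b1, b2, b3, b4⟩ := base_bounds k l hk hl hkl
  have d1 : E ≤ |(k:ℝ) * l + 2*ω^2| := by
    have := abs_sub_abs_le_abs_sub ((k:ℝ)*l) (-(2*ω^2))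
    simp only [sub_neg_eq_add, abs_neg] at this
    have h2 : |2*ω^2| = 2*ω^2 := abs_of_nonneg (by positivity)
    linarith [this, h2.le, h2.ge]
  have d2 : E ≤ |(l:ℝ)^2 + (k:ℝ)*l - 2*ω^2| := by
    have := abs_sub_abs_le_abs_sub ((l:ℝ)^2 + (k:ℝ)*l) (2*ω^2)
    have h2 : |2*ω^2| = 2*ω^2 := abs_of_nonneg (by positivity)
    linarith
  have d3 : E ≤ |(k:ℝ)^2 + (k:ℝ)*l - 2*ω^2| := by
    have := abs_sub_abs_le_abs_sub ((k:ℝ)^2 + (k:ℝ)*l) (2*ω^2)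
    have h2 : |2*ω^2| = 2*ω^2 := abs_of_nonneg (by positivity)
    linarith
  have d4 : E ≤ |(k:ℝ)^2 + (l:ℝ)^2 + (k:ℝ)*l - 2*ω^2| := by
    have := abs_sub_abs_le_abs_sub ((k:ℝ)^2 + (l:ℝ)^2 + (k:ℝ)*l) (2*ω^2)
    have h2 : |2*ω^2| = 2*ω^2 := abs_of_nonneg (by positivity)
    linarith
  set t1 := 1 / (2 * ((k : ℝ) * l + 2 * ω ^ 2)) with ht1
  set t2 := 1 / (2 * ((l : ℝ) ^ 2 + k * l - 2 * ω ^ 2)) with ht2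
  set t3 := 1 / (2 * ((k : ℝ) ^ 2 + k * l - 2 * ω ^ 2)) with ht3
  set t4 := 1 / (2 * ((k : ℝ) ^ 2 + (l : ℝ) ^ 2 + k * l - 2 * ω ^ 2)) with ht4
  have hb1 : |t1| ≤ 1/(2*E) := term_bound hE d1
  have hb2 : |t2| ≤ 1/(2*E) := term_bound hE d2
  have hb3 : |t3| ≤ 1/(2*E) := term_bound hE d3
  have hb4 : |t4| ≤ 1/(2*E) := term_bound hE d4
  have hD : Dfun k l ω - 1 = (-2*ω^2) * (t1 + t2 + t3 + t4) := by
    rw [Dfun]; ring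
  rw [hD, abs_mul]
  have habs : |(-2*ω^2 : ℝ)| = 2*ω^2 := by
    rw [abs_of_nonpos (by nlinarith [sq_nonneg ω] : (-2*ω^2:ℝ) ≤ 0)]; ring
  rw [habs]
  have hsum : |t1 + t2 + t3 + t4| ≤ 4 * (1/(2*E)) := by
    calc |t1 + t2 + t3 + t4| ≤ |t1 + t2 + t3| + |t4| := abs_add_le _ _
    _ ≤ |t1 + t2| + |t3| + |t4| := by linarith [abs_add_le (t1 + t2) t3]
    _ ≤ |t1| + |t2| + |t3| + |t4| := by linarith [abs_add_le t1 t2]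
    _ ≤ 4 * (1/(2*E)) := by linarith
  calc 2*ω^2 * |t1 + t2 + t3 + t4| ≤ 2*ω^2 * (4 * (1/(2*E))) := by
        apply mul_le_mul_of_nonneg_left hsum (by positivity)
  _ = 4 * ω^2 / E := by field_simp

/-- For fixed `ω > 0`, `D(k,ℓ,ω) → 1` as `|k| + |ℓ| → ∞` over admissible
pairs; consequently there is a finite exceptional set `S` such that for all
`ω ∈ (1/2, 3/2) \ S`, `D(k,ℓ,ω) ≠ 0` for every admissible pair `(k,ℓ)`. -/
theorem D_tendsto_one :
    (∀ ω : ℝ, 0 < ω → ∀ δ : ℝ, 0 < δ → ∃ N : ℕ, ∀ k l : ℤ, admissible k l ω →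
      (N : ℝ) ≤ |(k : ℝ)| + |(l : ℝ)| → |Dfun k l ω - 1| < δ) ∧
    ∃ S : Set ℝ, S.Finite ∧ ∀ ω ∈ Set.Ioo (1 / 2 : ℝ) (3 / 2), ω ∉ S →
      ∀ k l : ℤ, admissible k l ω → Dfun k l ω ≠ 0 := by
  constructor
  · intro ω hω δ hδ
    have hE : (0:ℝ) < 4*ω^2/δ + 1 := by positivity
    obtain ⟨N, hN⟩ := exists_nat_ge (4*((4*ω^2/δ + 1) + 2*ω^2))
    refine ⟨N, fun k l hadm hM => ?_⟩
    have hE2 : (4*ω^2/δ + 1) + 2*ω^2 ≤ (|(k:ℝ)| + |(l:ℝ)|)/4 := by linarith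
    have := Dfun_bound k l ω hadm (4*ω^2/δ + 1) hE hE2
    have hlt : 4 * ω^2 / (4*ω^2/δ + 1) < δ := by
      rw [div_lt_iff₀ hE]
      have hq : δ * (4*ω^2/δ) = 4*ω^2 := by field_simp
      nlinarith
    linarith
  · set F : Finset (ℤ × ℤ) :=
      (Finset.Icc (-100 : ℤ) 100 ×ˢ Finset.Icc (-100 : ℤ) 100).filter
        (fun p => p.1 ≠ 0 ∧ p.2 ≠ 0 ∧ p.1 + p.2 ≠ 0) with hF
    refine ⟨⋃ p ∈ (F : Set (ℤ × ℤ)), {ω | (Pp p.1 p.2).IsRoot ω}, ?_, ?_⟩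
    · apply Set.Finite.biUnion F.finite_toSet
      intro p hp
      rw [Finset.mem_coe, hF, Finset.mem_filter] at hp
      exact Polynomial.finite_setOf_isRoot (Pp_ne_zero p.1 p.2 hp.2.1 hp.2.2.1 hp.2.2.2)
    · rintro ω ⟨hω1, hω2⟩ hωS k l hadm hzero
      obtain ⟨hk, hl, hkl, h1, h2, h3, h4⟩ := hadm
      by_cases hbig : (100:ℝ) ≤ |(k:ℝ)| + |(l:ℝ)|
      · -- large pairs: |D - 1| < 1 so D ≠ 0
        have hω0 : 0 < ω := by linarith
        have hωsq : ω^2 < 9/4 := by nlinarith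
        have hE2 : (20:ℝ) + 2*ω^2 ≤ (|(k:ℝ)| + |(l:ℝ)|)/4 := by nlinarith
        have := Dfun_bound k l ω ⟨hk, hl, hkl, h1, h2, h3, h4⟩ 20 (by norm_num) hE2
        rw [hzero] at this
        have : |(0:ℝ) - 1| ≤ 4*ω^2/20 := this
        rw [show ((0:ℝ) - 1) = -1 by ring, abs_neg, abs_one] at this
        nlinarith
      · -- small pairs: ω is a root of Pp k l, contradiction with ω ∉ S
        apply hωS
        have hKb : |k| ≤ 100 := by
          have h0 : (0:ℝ) ≤ |(l:ℝ)| := abs_nonneg _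
          have : |(k:ℝ)| < 100 := by push_neg at hbig; linarith
          rw [← Int.cast_abs] at this
          exact_mod_cast this.le
        have hLb : |l| ≤ 100 := by
          have h0 : (0:ℝ) ≤ |(k:ℝ)| := abs_nonneg _
          have : |(l:ℝ)| < 100 := by push_neg at hbig; linarith
          rw [← Int.cast_abs] at this
          exact_mod_cast this.le
        have hpF : (k, l) ∈ F := by
          rw [hF, Finset.mem_filter, Finset.mem_product]
          exact ⟨⟨Finset.mem_Icc.mpr (abs_le.mp hKb), Finset.mem_Icc.mpr (abs_le.mp hLb)⟩,
            hk, hl, hkl⟩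
        have hroot : (Pp k l).IsRoot ω := by
          have := Pp_key k l ω ⟨hk, hl, hkl, h1, h2, h3, h4⟩
          rw [hzero, zero_mul] at this
          exact this
        exact Set.mem_iUnion₂.mpr ⟨(k, l), Finset.mem_coe.mpr hpF, hroot⟩
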